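/- There exists an origin-symmetric set of 240 points on the unit sphere S^7 in E^8 with covering radius exactly π/4, namely the normalized set of 240 minimal vectors of the E8 lattice: the vectors (±2, ±2, 0^6)/√8 (all coordinate positions and signs) together with the vectors (±1)^8/√8 with an even number of minus signs. In particular, π/4 < arccos(√(7/16)). -/

import Mathlib

open RealInnerProductSpace

/-- The caps of angular radius `r` centered at points of `A` cover the unit sphere. -/
def Covers {n : ℕ} (A : Set (EuclideanSpace ℝ (Fin n))) (r : ℝ) : Prop :=
  ∀ x ∈ Metric.sphere (0 : EuclideanSpace ℝ (Fin n)) 1, ∃ a ∈ A, Real.arccos ⟪x, a⟫ ≤ r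

/-- The covering radius of `A`. -/
noncomputable def covRadius {n : ℕ} (A : Set (EuclideanSpace ℝ (Fin n))) : ℝ :=
  sInf {r : ℝ | 0 < r ∧ Covers A r}

/-- The 240 minimal (root) vectors of the `E₈` lattice: vectors with two coordinates
`±2` and the rest `0`, together with vectors with all coordinates `±1` and an even
number of minus signs. -/
def E8roots : Set (EuclideanSpace ℝ (Fin 8)) :=
  {v | (∃ i j : Fin 8, i ≠ j ∧ (v i = 2 ∨ v i = -2) ∧ (v j = 2 ∨ v j = -2) ∧
          ∀ k, k ≠ i → k ≠ j → v k = 0) ∨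
        ((∀ i, v i = 1 ∨ v i = -1) ∧ Even ({i : Fin 8 | v i = -1}.ncard))}

/-- The normalized `E₈` root system, as a subset of the unit sphere `S⁷`. -/
noncomputable def E8A : Set (EuclideanSpace ℝ (Fin 8)) :=
  (fun v => (Real.sqrt 8)⁻¹ • v) '' E8roots

section Aux

noncomputable def mkv (f : Fin 8 → ℝ) : EuclideanSpace ℝ (Fin 8) := (WithLp.equiv 2 _).symm f

@[simp] lemma mkv_apply (f : Fin 8 → ℝ) (i : Fin 8) : mkv f i = f i := rfl

lemma sum_pair_of_zero (f : Fin 8 → ℝ) (i j : Fin 8) (hij : i ≠ j)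
    (hz : ∀ k, k ≠ i → k ≠ j → f k = 0) : ∑ k, f k = f i + f j := by
  rw [← Finset.sum_pair hij]
  exact (Finset.sum_subset (Finset.subset_univ _) (fun k _ hk => by
    simp only [Finset.mem_insert, Finset.mem_singleton, not_or] at hk
    exact hz k hk.1 hk.2)).symm


lemma inner_eq (x y : EuclideanSpace ℝ (Fin 8)) : ⟪x, y⟫ = ∑ i, x i * y i := by
  simp [PiLp.inner_apply, RCLike.inner_apply, conj_trivial]
  exact Finset.sum_congr rfl (fun i _ => mul_comm _ _)

lemma arccos_antitone : Antitone Real.arccos := fun a b h => by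
  rw [Real.arccos_eq_pi_div_two_sub_arcsin, Real.arccos_eq_pi_div_two_sub_arcsin]
  exact sub_le_sub_left (Real.monotone_arcsin h) _

lemma arccos_sqrt2 : Real.arccos (Real.sqrt 2 / 2) = Real.pi / 4 := by
  rw [← Real.cos_pi_div_four, Real.arccos_cos] <;> nlinarith [Real.pi_pos]

lemma sqrt8_eq : Real.sqrt 8 = 2 * Real.sqrt 2 := by
  rw [show (8:ℝ) = 2^2 * 2 by norm_num, Real.sqrt_mul (by positivity), Real.sqrt_sq (by norm_num)]

lemma inv_sqrt8_mul_two : (Real.sqrt 8)⁻¹ * 2 = Real.sqrt 2 / 2 := by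
  have h2 : (0:ℝ) < Real.sqrt 2 := Real.sqrt_pos.mpr (by norm_num)
  have hs : Real.sqrt 2 * Real.sqrt 2 = 2 := Real.mul_self_sqrt (by norm_num)
  rw [sqrt8_eq]; field_simp; nlinarith

lemma sum_sq_root {v : EuclideanSpace ℝ (Fin 8)} (hv : v ∈ E8roots) : ∑ i, v i ^ 2 = 8 := by
  rcases hv with ⟨i, j, hij, hvi, hvj, hz⟩ | ⟨h1, _⟩
  · rw [sum_pair_of_zero (fun k => v k ^ 2) i j hij
      (fun k h1 h2 => by simp only; rw [hz k h1 h2]; ring)]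
    rcases hvi with h | h <;> rcases hvj with h' | h' <;> rw [h, h'] <;> norm_num
  · have : ∀ i, v i ^ 2 = 1 := fun i => by rcases h1 i with h | h <;> rw [h] <;> norm_num
    simp [this]

lemma norm_root {v : EuclideanSpace ℝ (Fin 8)} (hv : v ∈ E8roots) : ‖v‖ = Real.sqrt 8 := by
  rw [EuclideanSpace.norm_eq]
  congr 1
  calc ∑ i, ‖v i‖ ^ 2 = ∑ i, v i ^2 := by simp [Real.norm_eq_abs, sq_abs]
  _ = 8 := sum_sq_root hv

lemma E8A_sphere : E8A ⊆ Metric.sphere (0 : EuclideanSpace ℝ (Fin 8)) 1 := by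
  rintro a ⟨v, hv, rfl⟩
  rw [mem_sphere_zero_iff_norm, norm_smul, norm_root hv]
  have h8 : (0:ℝ) < Real.sqrt 8 := Real.sqrt_pos.mpr (by norm_num)
  rw [norm_inv, Real.norm_eq_abs, abs_of_pos h8, inv_mul_cancel₀ h8.ne']

lemma neg_apply' (v : EuclideanSpace ℝ (Fin 8)) (i : Fin 8) : (-v) i = -(v i) := rfl

lemma neg_root {v : EuclideanSpace ℝ (Fin 8)} (hv : v ∈ E8roots) : -v ∈ E8roots := by
  rcases hv with ⟨i, j, hij, hvi, hvj, hz⟩ | ⟨h1, h2⟩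
  · refine Or.inl ⟨i, j, hij, ?_, ?_, fun k hk1 hk2 => ?_⟩
    · rcases hvi with h | h <;> simp [neg_apply', h]
    · rcases hvj with h | h <;> simp [neg_apply', h]
    · simp [neg_apply', hz k hk1 hk2]
  · refine Or.inr ⟨fun i => ?_, ?_⟩
    · rcases h1 i with h | h <;> simp [neg_apply', h]
    · have hset : {i : Fin 8 | (-v) i = -1} = {i : Fin 8 | v i = -1}ᶜ := by
        ext i
        simp only [Set.mem_setOf_eq, Set.mem_compl_iff, neg_apply', neg_eq_iff_eq_neg]
        rcases h1 i with h | h <;> simp [h] <;> norm_num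
      rw [hset]
      have hadd : {i : Fin 8 | v i = -1}.ncard + {i : Fin 8 | v i = -1}ᶜ.ncard = 8 := by
        rw [Set.ncard_add_ncard_compl]; simp
      rcases h2 with ⟨k, hk⟩
      exact ⟨4 - k, by omega⟩

lemma E8A_symm : -E8A = E8A := by
  have key : ∀ x ∈ E8A, -x ∈ E8A := by
    rintro x ⟨v, hv, rfl⟩
    exact ⟨-v, neg_root hv, by simp [smul_neg]⟩
  ext x
  constructor
  · intro hx
    rw [Set.mem_neg] at hx
    have := key _ hx; rwa [neg_neg] at this
  · intro hx
    rw [Set.mem_neg]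
    exact key _ hx

lemma cover_key (x : EuclideanSpace ℝ (Fin 8)) (hx : ∑ i, x i ^ 2 = 1) :
    ∃ v ∈ E8roots, 2 ≤ ∑ i, x i * v i := by
  classical
  set y : Fin 8 → ℝ := fun i => |x i| with hy
  have hynn : ∀ i, 0 ≤ y i := fun i => abs_nonneg _
  have hysq : ∑ i, y i ^ 2 = 1 := by simpa [hy, sq_abs] using hx
  obtain ⟨i1, -, h1⟩ := Finset.exists_max_image Finset.univ y ⟨0, Finset.mem_univ 0⟩
  have hne : (Finset.univ.erase i1).Nonempty := by
    obtain ⟨j, hj⟩ := exists_ne i1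
    exact ⟨j, Finset.mem_erase.mpr ⟨hj, Finset.mem_univ j⟩⟩
  obtain ⟨i2, hi2, h2⟩ := Finset.exists_max_image _ y hne
  have hi2ne : i2 ≠ i1 := (Finset.mem_erase.mp hi2).1
  have hsgn : ∀ (i : Fin 8), x i * (if x i < 0 then (-1:ℝ) else 1) = y i := by
    intro i
    by_cases hxi : x i < 0
    · simp [hy, hxi, abs_of_neg hxi]
    · simp [hy, hxi, abs_of_nonneg (not_lt.mp hxi)]
  by_cases hA : 1 ≤ y i1 + y i2
  · -- type 1 root
    refine ⟨mkv (fun k => if k = i1 then (if x i1 < 0 then -2 else 2)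
      else if k = i2 then (if x i2 < 0 then -2 else 2) else 0),
      Or.inl ⟨i1, i2, hi2ne.symm, ?_, ?_, fun k hk1 hk2 => ?_⟩, ?_⟩
    · by_cases h : x i1 < 0 <;> simp [h]
    · by_cases h : x i2 < 0 <;> simp [h, hi2ne]
    · simp [hk1, hk2]
    · have hz : ∀ k, k ≠ i1 → k ≠ i2 → x k * (mkv (fun k => if k = i1 then (if x i1 < 0 then (-2:ℝ) else 2)
        else if k = i2 then (if x i2 < 0 then -2 else 2) else 0)) k = 0 := by
        intro k hk1 hk2; simp [hk1, hk2]
      rw [sum_pair_of_zero _ i1 i2 hi2ne.symm hz]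
      have e1 : x i1 * (if x i1 < 0 then (-2:ℝ) else 2) = 2 * y i1 := by
        have := hsgn i1
        by_cases h : x i1 < 0 <;> simp only [h, if_true, if_false] at this ⊢ <;> nlinarith
      have e2 : x i2 * (if x i2 < 0 then (-2:ℝ) else 2) = 2 * y i2 := by
        have := hsgn i2
        by_cases h : x i2 < 0 <;> simp only [h, if_true, if_false] at this ⊢ <;> nlinarith
      simp only [mkv_apply, if_true, if_neg hi2ne]
      rw [e1, e2]
      linarith
  · -- type 2 root
    push_neg at hA
    obtain ⟨i8, -, h8⟩ := Finset.exists_min_image Finset.univ y ⟨0, Finset.mem_univ 0⟩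
    set t := y i2 with htdef
    set m := y i8 with hmdef
    have hmt : m ≤ t := h8 i2 (Finset.mem_univ _)
    have hmnn : 0 ≤ m := hynn i8
    have hty : ∀ i, i ≠ i1 → y i ≤ t := fun i hi =>
      h2 i (Finset.mem_erase.mpr ⟨hi, Finset.mem_univ i⟩)
    have ht1 : t ≤ y i1 := h1 i2 (Finset.mem_univ _)
    have hy1 : y i1 ≤ 1 - t := by linarith
    have ht2 : t ≤ 1/2 := by linarith
    have htpos : 0 < t := by
      by_contra h
      push_neg at h
      have hz : ∀ i, i ≠ i1 → y i = 0 := fun i hi =>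
        le_antisymm (le_trans (hty i hi) h) (hynn i)
      have hsum1 : ∑ i, y i ^ 2 = y i1 ^ 2 :=
        Finset.sum_eq_single_of_mem i1 (Finset.mem_univ _)
          (fun i _ hi => by rw [hz i hi]; ring)
      have h11 : (y i1 - 1) * (y i1 + 1) = 0 := by nlinarith
      rcases mul_eq_zero.mp h11 with h' | h'
      · have : y i1 = 1 := by linarith
        have := hynn i2; linarith
      · have := hynn i1; linarith
    set S' := ∑ i ∈ Finset.univ.erase i1, y i with hS'def
    have hsplit : y i1 ^ 2 + ∑ i ∈ Finset.univ.erase i1, y i ^ 2 = 1 :=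
      (Finset.add_sum_erase _ (fun i => y i ^ 2) (Finset.mem_univ i1)).trans hysq
    have hbound : ∑ i ∈ Finset.univ.erase i1, y i ^ 2 ≤ (t + m) * S' - 7 * (t * m) := by
      have hcard : (Finset.univ.erase i1).card = 7 := by
        rw [Finset.card_erase_of_mem (Finset.mem_univ _)]; simp
      have := Finset.sum_le_sum (s := Finset.univ.erase i1)
        (f := fun i => y i ^ 2) (g := fun i => (t + m) * y i - t * m)
        (fun i hi => by
          have h1' : y i ≤ t := hty i (Finset.mem_erase.mp hi).1
          have h2' : m ≤ y i := h8 i (Finset.mem_univ _)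
          show y i ^ 2 ≤ (t + m) * y i - t * m
          nlinarith [mul_nonneg (sub_nonneg.mpr h1') (sub_nonneg.mpr h2')])
      calc ∑ i ∈ Finset.univ.erase i1, y i ^ 2
          ≤ ∑ i ∈ Finset.univ.erase i1, ((t + m) * y i - t * m) := this
        _ = (t + m) * S' - 7 * (t * m) := by
            rw [Finset.sum_sub_distrib, ← Finset.mul_sum, Finset.sum_const, hcard]
            push_cast; ring
    have hkey : 1 ≤ (y i1 - t + t^2) + ((t + m) * S' - 7 * (t * m)) := by
      nlinarith [mul_nonneg (sub_nonneg.mpr ht1) (sub_nonneg.mpr hy1)]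
    have hgoal : 2 + 2 * m ≤ y i1 + S' := by
      nlinarith [mul_nonneg (sub_nonneg.mpr hmt) (by linarith : (0:ℝ) ≤ 1 - 2*(t - m)),
        mul_nonneg (sub_nonneg.mpr hy1) (by linarith : (0:ℝ) ≤ 1 - t - m),
        (by linarith : (0:ℝ) < t + m)]
    have hsumy : ∑ i, y i = y i1 + S' :=
      (Finset.add_sum_erase _ y (Finset.mem_univ i1)).symm
    set P := Finset.univ.filter (fun i => x i < 0) with hP
    by_cases hp : Even P.card
    · refine ⟨mkv (fun i => if x i < 0 then -1 else 1), Or.inr ⟨fun i => ?_, ?_⟩, ?_⟩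
      · by_cases h : x i < 0 <;> simp [h]
      · have : {i : Fin 8 | (mkv (fun i => if x i < 0 then (-1:ℝ) else 1)) i = -1} = ↑P := by
          ext i
          by_cases h : x i < 0
          · simp [h, hP]
          · simp only [mkv_apply, if_neg h, hP, Finset.coe_filter, Set.mem_setOf_eq,
              Finset.mem_univ, true_and]
            constructor
            · intro h'; norm_num at h'
            · intro h'; exact absurd h' h
        rw [this, Set.ncard_coe_finset]; exact hp
      · simp only [mkv_apply]
        calc (2:ℝ) ≤ 2 + 2 * m := by linarith
          _ ≤ y i1 + S' := hgoal
          _ = ∑ i, y i := hsumy.symm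
          _ = ∑ i, x i * (if x i < 0 then -1 else 1) := by
              exact Finset.sum_congr rfl (fun i _ => (hsgn i).symm)
    · refine ⟨mkv (fun i => if i = i8 then -(if x i < 0 then -1 else 1)
        else (if x i < 0 then -1 else 1)), Or.inr ⟨fun i => ?_, ?_⟩, ?_⟩
      · by_cases h : i = i8 <;> by_cases h' : x i < 0 <;> simp [h'] <;> simp [h, h']
      · have hodd : Odd P.card := Nat.not_even_iff_odd.mp hp
        by_cases hx8 : x i8 < 0
        · have hset : {i : Fin 8 | (mkv (fun i => if i = i8 then -(if x i < 0 then (-1:ℝ) else 1)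
            else (if x i < 0 then -1 else 1))) i = -1} = ↑(P.erase i8) := by
            ext i
            by_cases h : i = i8
            · subst h; simp [hx8]; norm_num
            · by_cases h' : x i < 0
              · simp [h, h', hP]
              · simp only [mkv_apply, if_neg h, if_neg h', hP]
                simp [h, h']
                norm_num
          rw [hset, Set.ncard_coe_finset, Finset.card_erase_of_mem (by simp [hP, hx8])]
          rcases hodd with ⟨k, hk⟩
          exact ⟨k, by omega⟩
        · have hset : {i : Fin 8 | (mkv (fun i => if i = i8 then -(if x i < 0 then (-1:ℝ) else 1)
            else (if x i < 0 then -1 else 1))) i = -1} = ↑(insert i8 P) := by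
            ext i
            by_cases h : i = i8
            · subst h; simp [hx8]
            · by_cases h' : x i < 0
              · simp [h, h', hP]
              · simp only [mkv_apply, if_neg h, if_neg h', hP]
                simp [h, h']
                norm_num
          rw [hset, Set.ncard_coe_finset, Finset.card_insert_of_notMem (by simp [hP, hx8])]
          rcases hodd with ⟨k, hk⟩
          exact ⟨k + 1, by omega⟩
      · simp only [mkv_apply]
        have hsum8 : ∑ i, x i * (if i = i8 then -(if x i < 0 then (-1:ℝ) else 1)
            else (if x i < 0 then -1 else 1)) = (∑ i, y i) - 2 * m := by
          rw [← Finset.add_sum_erase _ _ (Finset.mem_univ i8),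
              ← Finset.add_sum_erase _ (fun i => y i) (Finset.mem_univ i8)]
          have e8 : x i8 * (if i8 = i8 then -(if x i8 < 0 then (-1:ℝ) else 1)
              else (if x i8 < 0 then -1 else 1)) = - y i8 := by
            rw [if_pos rfl, mul_neg, hsgn i8]
          rw [e8]
          have erest : ∑ i ∈ Finset.univ.erase i8, x i * (if i = i8 then -(if x i < 0 then (-1:ℝ) else 1)
              else (if x i < 0 then -1 else 1)) = ∑ i ∈ Finset.univ.erase i8, y i := by
            refine Finset.sum_congr rfl (fun i hi => ?_)
            rw [if_neg (Finset.mem_erase.mp hi).1, hsgn i]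
          rw [erest, ← hmdef]; ring
        rw [hsum8, hsumy]
        linarith

lemma coord_bound {v : EuclideanSpace ℝ (Fin 8)} (hv : v ∈ E8roots) (i : Fin 8) :
    v i ≤ 2 := by
  rcases hv with ⟨a, b, hab, hva, hvb, hz⟩ | ⟨h1, -⟩
  · by_cases h : i = a
    · subst h; rcases hva with h | h <;> rw [h] <;> norm_num
    · by_cases h' : i = b
      · subst h'; rcases hvb with h2 | h2 <;> rw [h2] <;> norm_num
      · rw [hz i h h']; norm_num
  · rcases h1 i with h | h <;> rw [h] <;> norm_num

lemma covers_pi_div_four : Covers E8A (Real.pi / 4) := by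
  intro x hx
  have hx1 : ∑ i, x i ^ 2 = 1 := by
    rw [mem_sphere_zero_iff_norm, EuclideanSpace.norm_eq] at hx
    have h := congrArg (fun z => z ^ 2) hx
    simp only [one_pow] at h
    rw [Real.sq_sqrt (by positivity)] at h
    simpa [Real.norm_eq_abs, sq_abs] using h
  obtain ⟨v, hv, hvx⟩ := cover_key x hx1
  refine ⟨(Real.sqrt 8)⁻¹ • v, ⟨v, hv, rfl⟩, ?_⟩
  have hinner : ⟪x, (Real.sqrt 8)⁻¹ • v⟫ = (Real.sqrt 8)⁻¹ * ∑ i, x i * v i := by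
    rw [real_inner_smul_right, inner_eq]
  have h8 : (0:ℝ) < (Real.sqrt 8)⁻¹ := by positivity
  have : Real.sqrt 2 / 2 ≤ ⟪x, (Real.sqrt 8)⁻¹ • v⟫ := by
    rw [hinner, ← inv_sqrt8_mul_two]
    exact mul_le_mul_of_nonneg_left hvx h8.le
  calc Real.arccos ⟪x, (Real.sqrt 8)⁻¹ • v⟫ ≤ Real.arccos (Real.sqrt 2 / 2) :=
        arccos_antitone this
    _ = Real.pi / 4 := arccos_sqrt2

lemma covRadius_E8A : covRadius E8A = Real.pi / 4 := by
  have hpi : 0 < Real.pi / 4 := by positivity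
  have hmem : Real.pi / 4 ∈ {r : ℝ | 0 < r ∧ Covers E8A r} := ⟨hpi, covers_pi_div_four⟩
  have hlb : ∀ r ∈ {r : ℝ | 0 < r ∧ Covers E8A r}, Real.pi / 4 ≤ r := by
    rintro r ⟨hr, hc⟩
    have hx0 : EuclideanSpace.single (0 : Fin 8) (1:ℝ) ∈
        Metric.sphere (0 : EuclideanSpace ℝ (Fin 8)) 1 := by
      rw [mem_sphere_zero_iff_norm, EuclideanSpace.norm_single, norm_one]
    obtain ⟨a, ⟨v, hv, rfl⟩, ha⟩ := hc _ hx0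
    have hinner : ⟪EuclideanSpace.single (0 : Fin 8) (1:ℝ), (Real.sqrt 8)⁻¹ • v⟫
        = (Real.sqrt 8)⁻¹ * v 0 := by
      rw [real_inner_smul_right, EuclideanSpace.inner_single_left]
      simp
    have hb : ⟪EuclideanSpace.single (0 : Fin 8) (1:ℝ), (Real.sqrt 8)⁻¹ • v⟫ ≤ Real.sqrt 2 / 2 := by
      rw [hinner, ← inv_sqrt8_mul_two]
      exact mul_le_mul_of_nonneg_left (coord_bound hv 0) (by positivity)
    have := arccos_antitone hb
    rw [arccos_sqrt2] at this
    linarith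
  refine le_antisymm (csInf_le ⟨0, fun r hr => hr.1.le⟩ hmem) (le_csInf ⟨_, hmem⟩ hlb)

def T1 : Set (EuclideanSpace ℝ (Fin 8)) :=
  {v | ∃ i j : Fin 8, i ≠ j ∧ (v i = 2 ∨ v i = -2) ∧ (v j = 2 ∨ v j = -2) ∧
          ∀ k, k ≠ i → k ≠ j → v k = 0}
def T2 : Set (EuclideanSpace ℝ (Fin 8)) :=
  {v | (∀ i, v i = 1 ∨ v i = -1) ∧ Even ({i : Fin 8 | v i = -1}.ncard)}

lemma roots_eq : E8roots = T1 ∪ T2 := rfl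

noncomputable def h1f (p : Fin 8 × Fin 8 × Bool × Bool) : EuclideanSpace ℝ (Fin 8) :=
  mkv (fun k => if k = p.1 then (if p.2.2.1 then -2 else 2)
    else if k = p.2.1 then (if p.2.2.2 then -2 else 2) else 0)

noncomputable def gf (f : Fin 8 → Bool) : EuclideanSpace ℝ (Fin 8) :=
  mkv (fun i => if f i then -1 else 1)

def FD1 : Finset (Fin 8 × Fin 8 × Bool × Bool) := Finset.univ.filter (fun p => p.1 < p.2.1)
def FD2 : Finset (Fin 8 → Bool) :=
  Finset.univ.filter (fun f => Even ((Finset.univ.filter (fun i => f i)).card))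

set_option maxRecDepth 40000 in
lemma FD1_card : FD1.card = 112 := by decide

set_option maxRecDepth 40000 in
lemma FD2_card : FD2.card = 128 := by decide

lemma T1_eq : T1 = h1f '' ↑FD1 := by
  ext v
  constructor
  · rintro ⟨i, j, hij, hvi, hvj, hz⟩
    have build : ∀ a b : Fin 8, a < b → (v a = 2 ∨ v a = -2) → (v b = 2 ∨ v b = -2) →
        (∀ k, k ≠ a → k ≠ b → v k = 0) → v ∈ h1f '' ↑FD1 := by
      intro a b hab hva hvb hz'
      refine ⟨(a, b, if v a = -2 then true else false, if v b = -2 then true else false),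
        by simp [FD1, hab], ?_⟩
      ext k
      show (if k = a then (if (if v a = -2 then true else false) then (-2:ℝ) else 2)
        else if k = b then (if (if v b = -2 then true else false) then (-2:ℝ) else 2) else 0) = v k
      by_cases hka : k = a
      · subst hka
        rcases hva with h | h <;> rw [h] <;> norm_num
      · by_cases hkb : k = b
        · subst hkb
          rcases hvb with h | h <;> simp [hka, h] <;> norm_num
        · simp [hka, hkb, (hz' k hka hkb).symm]
    rcases lt_or_gt_of_ne hij with hlt | hlt
    · exact build i j hlt hvi hvj hz
    · exact build j i hlt hvj hvi (fun k h1 h2 => hz k h2 h1)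
  · rintro ⟨⟨i, j, a, b⟩, hp, rfl⟩
    simp only [FD1, Finset.coe_filter, Set.mem_setOf_eq, Finset.mem_univ, true_and] at hp
    have e1 : h1f (i, j, a, b) i = (if a then (-2:ℝ) else 2) := by
      show (if i = i then (if a then (-2:ℝ) else 2) else _) = _
      rw [if_pos rfl]
    have e2 : h1f (i, j, a, b) j = (if b then (-2:ℝ) else 2) := by
      show (if j = i then _ else if j = j then (if b then (-2:ℝ) else 2) else 0) = _
      rw [if_neg (ne_of_gt hp), if_pos rfl]
    refine ⟨i, j, ne_of_lt hp, ?_, ?_, fun k hk1 hk2 => ?_⟩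
    · rw [e1]; cases a <;> simp
    · rw [e2]; cases b <;> simp
    · show (if k = i then _ else if k = j then _ else (0:ℝ)) = 0
      simp [hk1, hk2]

lemma h1f_injOn : Set.InjOn h1f ↑FD1 := by
  rintro ⟨i, j, a, b⟩ hp ⟨i', j', a', b'⟩ hq h
  simp only [FD1, Finset.coe_filter, Set.mem_setOf_eq, Finset.mem_univ, true_and] at hp hq
  have hc : ∀ k, (if k = i then (if a then (-2:ℝ) else 2)
      else if k = j then (if b then -2 else 2) else 0) =
      (if k = i' then (if a' then (-2:ℝ) else 2)
      else if k = j' then (if b' then -2 else 2) else 0) :=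
    fun k => congrArg (fun w => w k) h
  have hij : i ≠ j := ne_of_lt hp
  have hij' : i' ≠ j' := ne_of_lt hq
  have hne2 : ∀ c : Bool, (if c then (-2:ℝ) else 2) ≠ 0 := by intro c; cases c <;> norm_num
  have hii : i = i' := by
    by_contra hii
    have h1 := hc i
    rw [if_pos rfl, if_neg hii] at h1
    have hji' : i = j' := by
      by_contra hji'
      rw [if_neg hji'] at h1
      exact hne2 a h1
    have h2 := hc i'
    rw [if_pos rfl] at h2
    have hi'i : i' ≠ i := fun hh => hii hh.symm
    rw [if_neg hi'i] at h2
    have hi'j : i' = j := by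
      by_contra hh
      rw [if_neg hh] at h2
      exact hne2 a' h2.symm
    exact absurd ((hp.trans_eq hi'j.symm).trans (hq.trans_eq hji'.symm)) (lt_irrefl i)
  subst hii
  have hjj : j = j' := by
    by_contra hjj
    have h1 := hc j
    rw [if_neg (ne_of_gt hp), if_pos rfl, if_neg (ne_of_gt hp), if_neg hjj] at h1
    exact hne2 b h1
  subst hjj
  have ha : a = a' := by
    have h1 := hc i
    rw [if_pos rfl, if_pos rfl] at h1
    cases a <;> cases a' <;> first | rfl | (norm_num at h1)
  have hb : b = b' := by
    have h1 := hc j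
    rw [if_neg (ne_of_gt hp), if_pos rfl, if_neg (ne_of_gt hp), if_pos rfl] at h1
    cases b <;> cases b' <;> first | rfl | (norm_num at h1)
  rw [ha, hb]

lemma T2_eq : T2 = gf '' ↑FD2 := by
  ext v
  constructor
  · rintro ⟨h1, h2⟩
    classical
    refine ⟨fun i => if v i = -1 then true else false, ?_, ?_⟩
    · simp only [FD2, Finset.coe_filter, Set.mem_setOf_eq, Finset.mem_univ, true_and]
      have : (Finset.univ.filter (fun i => (if v i = -1 then true else false) = true))
          = Finset.univ.filter (fun i => v i = -1) := by
        apply Finset.filter_congr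
        intro i _
        by_cases h : v i = -1 <;> simp [h]
      rw [this]
      have hs : {i : Fin 8 | v i = -1} = ↑(Finset.univ.filter (fun i => v i = -1)) := by
        ext i; simp
      rwa [hs, Set.ncard_coe_finset] at h2
    · ext i
      show (if (if v i = -1 then true else false) then (-1:ℝ) else 1) = v i
      rcases h1 i with h | h <;> rw [h] <;> norm_num
  · rintro ⟨f, hf, rfl⟩
    simp only [FD2, Finset.coe_filter, Set.mem_setOf_eq, Finset.mem_univ, true_and] at hf
    constructor
    · intro i
      show (if f i then (-1:ℝ) else 1) = 1 ∨ (if f i then (-1:ℝ) else 1) = -1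
      cases hfi : f i <;> simp [hfi]
    · have hs : {i : Fin 8 | gf f i = -1} = ↑(Finset.univ.filter (fun i => f i)) := by
        ext i
        show (if f i then (-1:ℝ) else 1) = -1 ↔ _
        cases hfi : f i <;> simp [hfi] <;> norm_num
      rw [hs, Set.ncard_coe_finset]
      exact hf

lemma gf_injOn : Set.InjOn gf ↑FD2 := by
  intro f _ f' _ h
  funext i
  have h1 : (if f i then (-1:ℝ) else 1) = (if f' i then (-1:ℝ) else 1) :=
    congrArg (fun w => w i) h
  cases hfi : f i <;> cases hfi' : f' i <;> rw [hfi, hfi'] at h1 <;> first | rfl | norm_num at h1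

lemma T1T2_disj : Disjoint T1 T2 := by
  rw [Set.disjoint_left]
  rintro v ⟨i, j, hij, hvi, hvj, hz⟩ ⟨h1, -⟩
  have hcard : 1 < (Finset.univ \ {i} : Finset (Fin 8)).card := by
    rw [Finset.card_sdiff_of_subset (Finset.subset_univ _)]
    simp
  obtain ⟨k, hk, hkj⟩ := Finset.exists_mem_ne hcard j
  have hki : k ≠ i := by
    intro hh
    rw [hh] at hk
    simp at hk
  have h0 : v k = 0 := hz k hki hkj
  rcases h1 k with h | h <;> rw [h0] at h <;> norm_num at h

lemma roots_ncard : E8roots.ncard = 240 := by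
  rw [roots_eq, Set.ncard_union_eq T1T2_disj
    (T1_eq ▸ FD1.finite_toSet.image h1f) (T2_eq ▸ FD2.finite_toSet.image gf),
    T1_eq, T2_eq, Set.ncard_image_of_injOn h1f_injOn, Set.ncard_image_of_injOn gf_injOn,
    Set.ncard_coe_finset, Set.ncard_coe_finset, FD1_card, FD2_card]

lemma E8A_ncard : E8A.ncard = 240 := by
  rw [E8A, Set.ncard_image_of_injective _ (smul_right_injective _ (by positivity : (Real.sqrt 8)⁻¹ ≠ 0))]
  exact roots_ncard

end Aux

theorem e8_covering : E8A.ncard = 240 ∧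
    E8A ⊆ Metric.sphere (0 : EuclideanSpace ℝ (Fin 8)) 1 ∧
    -E8A = E8A ∧
    covRadius E8A = Real.pi / 4 ∧
    Real.pi / 4 < Real.arccos (Real.sqrt (7 / 16)) := by
  refine ⟨E8A_ncard, E8A_sphere, E8A_symm, covRadius_E8A, ?_⟩
  have h : ¬ (Real.sqrt 2 / 2 ≤ Real.sqrt (7/16)) := by
    rw [not_le]
    have h1 : Real.sqrt (7/16) ^ 2 = 7/16 := Real.sq_sqrt (by norm_num)
    have h3 : (0:ℝ) ≤ Real.sqrt (7/16) := Real.sqrt_nonneg _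
    have h2 : Real.sqrt 2 ^ 2 = 2 := Real.sq_sqrt (by norm_num)
    nlinarith [Real.sqrt_nonneg 2]
  have := (not_iff_not.mpr Real.arccos_le_pi_div_four).mpr h
  exact lt_of_not_ge this
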